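/- Let R be a ring such that every prime factor ring R/P embeds in a ring in which every right strongly π-regular element is strongly π-regular. Then every right strongly π-regular element of R is strongly π-regular. -/
import Mathlib

section Helpers

variable {T : Type*} [Ring T]

private lemma lift_right {t u : T} {n : ℕ} (h : t ^ n = t ^ (n + 1) * u) (k : ℕ) :
    t ^ (n + k) = t ^ (n + k + 1) * u := by
  calc t ^ (n + k) = t ^ k * t ^ n := by rw [← pow_add, add_comm]
    _ = t ^ k * (t ^ (n + 1) * u) := by rw [h]
    _ = (t ^ k * t ^ (n + 1)) * u := by rw [mul_assoc]
    _ = t ^ (n + k + 1) * u := by rw [← pow_add, show k + (n + 1) = n + k + 1 from by omega]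

private lemma lift_left {t v : T} {m : ℕ} (h : t ^ m = v * t ^ (m + 1)) (k : ℕ) :
    t ^ (m + k) = v * t ^ (m + k + 1) := by
  calc t ^ (m + k) = t ^ m * t ^ k := pow_add t m k
    _ = (v * t ^ (m + 1)) * t ^ k := by rw [h]
    _ = v * (t ^ (m + 1) * t ^ k) := by rw [mul_assoc]
    _ = v * t ^ (m + k + 1) := by rw [← pow_add, show m + 1 + k = m + k + 1 from by omega]

private lemma alg_key {t u v : T} {N : ℕ}
    (h1 : t ^ N = t ^ (N + 1) * u) (h2 : t ^ N = v * t ^ (N + 1)) :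
    t ^ N = t ^ N * u ^ (N + 1) * t ^ (N + 1) := by
  have step2 : ∀ j, t ^ (N + j) = v * t ^ (N + j + 1) := lift_left h2
  have L2 : ∀ j, t ^ N = v ^ j * t ^ (N + j) := by
    intro j
    induction j with
    | zero => simp
    | succ j ih =>
      show t ^ N = v ^ (j + 1) * t ^ (N + j + 1)
      calc t ^ N = v ^ j * t ^ (N + j) := ih
        _ = v ^ j * (v * t ^ (N + j + 1)) := by rw [step2 j]
        _ = v ^ (j + 1) * t ^ (N + j + 1) := by rw [← mul_assoc, ← pow_succ]
  have L3 : t ^ N * u = v * t ^ N := by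
    conv_lhs => rw [h2]
    rw [mul_assoc, ← h1]
  have L4 : ∀ k, t ^ N * u ^ k = v ^ k * t ^ N := by
    intro k
    induction k with
    | zero => simp
    | succ k ih =>
      calc t ^ N * u ^ (k + 1) = (t ^ N * u ^ k) * u := by rw [pow_succ, mul_assoc]
        _ = v ^ k * (t ^ N * u) := by rw [ih, mul_assoc]
        _ = v ^ k * (v * t ^ N) := by rw [L3]
        _ = v ^ (k + 1) * t ^ N := by rw [← mul_assoc, ← pow_succ]
  calc t ^ N = v ^ (N + 1) * t ^ (N + (N + 1)) := L2 (N + 1)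
    _ = v ^ (N + 1) * (t ^ N * t ^ (N + 1)) := by rw [pow_add t N (N + 1)]
    _ = (v ^ (N + 1) * t ^ N) * t ^ (N + 1) := by rw [mul_assoc]
    _ = t ^ N * u ^ (N + 1) * t ^ (N + 1) := by rw [L4]

end Helpers

/-- If every prime factor ring of `R` embeds in a ring in which every right
strongly π-regular element is strongly π-regular, then every right strongly
π-regular element of `R` is strongly π-regular. -/
theorem stmt_4 {R : Type u} [Ring R]
    (h : ∀ P : TwoSidedIdeal R, P ≠ ⊤ →
      (∀ I J : TwoSidedIdeal R, (∀ i ∈ I, ∀ j ∈ J, i * j ∈ P) → I ≤ P ∨ J ≤ P) →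
      ∃ (T : Type u) (_ : Ring T) (f : P.ringCon.Quotient →+* T),
        Function.Injective f ∧
        ∀ t : T, (∃ (n : ℕ) (x : T), 0 < n ∧ t ^ n = t ^ (n + 1) * x) →
          ∃ (m : ℕ) (y : T), 0 < m ∧ t ^ m = y * t ^ (m + 1))
    (a : R) (ha : ∃ (n : ℕ) (x : R), 0 < n ∧ a ^ n = a ^ (n + 1) * x) :
    ∃ (n m : ℕ) (x y : R), 0 < n ∧ 0 < m ∧
      a ^ n = a ^ (n + 1) * x ∧ a ^ m = y * a ^ (m + 1) := by
  obtain ⟨n, x, hn, hax⟩ := ha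
  suffices H : ∃ (m : ℕ) (y : R), 0 < m ∧ a ^ m = y * a ^ (m + 1) by
    obtain ⟨m, y, hm, hy⟩ := H
    exact ⟨n, m, x, y, hn, hm, hax, hy⟩
  by_contra H
  push_neg at H
  set S : Set (TwoSidedIdeal R) :=
    {P | ∀ (m : ℕ) (y : R), 0 < m → a ^ m - y * a ^ (m + 1) ∉ P} with hSdef
  have hbot : (⊥ : TwoSidedIdeal R) ∈ S := by
    intro m y hm hmem
    rw [TwoSidedIdeal.mem_bot] at hmem
    exact H m y hm (sub_eq_zero.mp hmem)
  obtain ⟨P, hPS, hPmax⟩ := zorn_le₀ S (by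
    intro c hcS hchain
    rcases c.eq_empty_or_nonempty with rfl | ⟨P₀, hP₀⟩
    · exact ⟨⊥, hbot, by simp⟩
    · refine ⟨TwoSidedIdeal.mk' {r | ∃ Q ∈ c, r ∈ Q}
        ⟨P₀, hP₀, P₀.zero_mem⟩
        (fun {r s} hr hs => by
          obtain ⟨Q1, hQ1, hr⟩ := hr
          obtain ⟨Q2, hQ2, hs⟩ := hs
          rcases hchain.total hQ1 hQ2 with hle | hle
          · exact ⟨Q2, hQ2, Q2.add_mem (hle hr) hs⟩
          · exact ⟨Q1, hQ1, Q1.add_mem hr (hle hs)⟩)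
        (fun {r} hr => by
          obtain ⟨Q, hQ, hr⟩ := hr; exact ⟨Q, hQ, Q.neg_mem hr⟩)
        (fun {r s} hs => by
          obtain ⟨Q, hQ, hs⟩ := hs; exact ⟨Q, hQ, Q.mul_mem_left _ _ hs⟩)
        (fun {r s} hr => by
          obtain ⟨Q, hQ, hr⟩ := hr; exact ⟨Q, hQ, Q.mul_mem_right _ _ hr⟩), ?_, ?_⟩
      · intro m y hm hmem
        rw [TwoSidedIdeal.mem_mk'] at hmem
        obtain ⟨Q, hQc, hQ⟩ := hmem
        exact hcS hQc m y hm hQ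
      · intro z hz
        refine TwoSidedIdeal.le_iff.mpr fun r hr => ?_
        rw [SetLike.mem_coe, TwoSidedIdeal.mem_mk']
        exact ⟨z, hz, hr⟩)
  -- P is a proper ideal
  have hPne : P ≠ ⊤ := by
    intro htop
    exact hPS 1 0 one_pos (by rw [htop]; exact TwoSidedIdeal.mem_top _)
  -- key: any ideal not below P yields a decomposition
  have key : ∀ I : TwoSidedIdeal R, ¬ I ≤ P →
      ∃ (m : ℕ) (y p i : R), 0 < m ∧ p ∈ P ∧ i ∈ I ∧
        a ^ m = y * a ^ (m + 1) + (p + i) := by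
    intro I hI
    set K : TwoSidedIdeal R := TwoSidedIdeal.mk' {r | ∃ p ∈ P, ∃ i ∈ I, r = p + i}
      ⟨0, P.zero_mem, 0, I.zero_mem, by simp⟩
      (fun {r s} hr hs => by
        obtain ⟨p, hp, i, hi, rfl⟩ := hr
        obtain ⟨q, hq, j, hj, rfl⟩ := hs
        exact ⟨p + q, P.add_mem hp hq, i + j, I.add_mem hi hj, by abel⟩)
      (fun {r} hr => by
        obtain ⟨p, hp, i, hi, rfl⟩ := hr
        exact ⟨-p, P.neg_mem hp, -i, I.neg_mem hi, by abel⟩)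
      (fun {r s} hs => by
        obtain ⟨p, hp, i, hi, rfl⟩ := hs
        exact ⟨r * p, P.mul_mem_left _ _ hp, r * i, I.mul_mem_left _ _ hi, by
          rw [mul_add]⟩)
      (fun {r s} hr => by
        obtain ⟨p, hp, i, hi, rfl⟩ := hr
        exact ⟨p * s, P.mul_mem_right _ _ hp, i * s, I.mul_mem_right _ _ hi, by
          rw [add_mul]⟩) with hKdef
    have hKmem : ∀ r : R, r ∈ K ↔ ∃ p ∈ P, ∃ i ∈ I, r = p + i := by
      intro r
      rw [hKdef, TwoSidedIdeal.mem_mk']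
      rfl
    have hPK : P ≤ K := TwoSidedIdeal.le_iff.mpr fun r hr => by
      rw [SetLike.mem_coe, hKmem]
      exact ⟨r, hr, 0, I.zero_mem, by simp⟩
    have hKnot : K ∉ S := by
      intro hK
      have hKP : K ≤ P := hPmax hK hPK
      rw [TwoSidedIdeal.le_iff, Set.not_subset] at hI
      obtain ⟨i₀, hi₀I, hi₀P⟩ := hI
      exact hi₀P (hKP ((hKmem i₀).mpr ⟨0, P.zero_mem, i₀, hi₀I, by simp⟩))
    rw [hSdef, Set.mem_setOf_eq] at hKnot
    push_neg at hKnot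
    obtain ⟨m, y, hm, hmem⟩ := hKnot
    rw [hKmem] at hmem
    obtain ⟨p, hp, i, hi, heq⟩ := hmem
    refine ⟨m, y, p, i, hm, hp, hi, ?_⟩
    rw [← heq]
    abel
  -- P is prime
  have hprime : ∀ I J : TwoSidedIdeal R,
      (∀ i ∈ I, ∀ j ∈ J, i * j ∈ P) → I ≤ P ∨ J ≤ P := by
    intro I J hIJ
    by_contra hcon
    push_neg at hcon
    obtain ⟨hInle, hJnle⟩ := hcon
    obtain ⟨m, y, p, i, hm, hp, hi, heqI⟩ := key I hInle
    obtain ⟨m', y', q, j, hm', hq, hj, heqJ⟩ := key J hJnle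
    have iter : ∀ k : ℕ, ∃ q' ∈ P, ∃ j' ∈ J,
        a ^ m' = y' ^ k * a ^ (m' + k) + (q' + j') := by
      intro k
      induction k with
      | zero => exact ⟨0, P.zero_mem, 0, J.zero_mem, by simp⟩
      | succ k ih =>
        obtain ⟨q', hq', j', hj', hk⟩ := ih
        refine ⟨y' ^ k * (q * a ^ k) + q',
          P.add_mem (P.mul_mem_left _ _ (P.mul_mem_right _ _ hq)) hq',
          y' ^ k * (j * a ^ k) + j',
          J.add_mem (J.mul_mem_left _ _ (J.mul_mem_right _ _ hj)) hj', ?_⟩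
        show a ^ m' = y' ^ (k + 1) * a ^ (m' + k + 1)
          + ((y' ^ k * (q * a ^ k) + q') + (y' ^ k * (j * a ^ k) + j'))
        have hstep : a ^ (m' + k) = y' * a ^ (m' + k + 1) + (q * a ^ k + j * a ^ k) := by
          calc a ^ (m' + k) = a ^ m' * a ^ k := pow_add a m' k
            _ = (y' * a ^ (m' + 1) + (q + j)) * a ^ k := by rw [heqJ]
            _ = y' * (a ^ (m' + 1) * a ^ k) + (q * a ^ k + j * a ^ k) := by noncomm_ring
            _ = y' * a ^ (m' + k + 1) + (q * a ^ k + j * a ^ k) := by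
                rw [← pow_add, show m' + 1 + k = m' + k + 1 from by omega]
        calc a ^ m' = y' ^ k * a ^ (m' + k) + (q' + j') := hk
          _ = y' ^ k * (y' * a ^ (m' + k + 1) + (q * a ^ k + j * a ^ k)) + (q' + j') := by
              rw [hstep]
          _ = y' ^ (k + 1) * a ^ (m' + k + 1)
              + ((y' ^ k * (q * a ^ k) + q') + (y' ^ k * (j * a ^ k) + j')) := by
              have hA : y' ^ k * (y' * a ^ (m' + k + 1)) = y' ^ (k + 1) * a ^ (m' + k + 1) := by
                rw [← mul_assoc, ← pow_succ]
              rw [mul_add, mul_add, hA]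
              abel
    obtain ⟨q', hq', j', hj', hiter⟩ := iter (m + 1)
    have e1 : a ^ (m + m') = y * a ^ (m + m' + 1)
        + ((p + i) * (y' ^ (m + 1) * a ^ (m + m' + 1)) + (p + i) * (q' + j')) := by
      calc a ^ (m + m') = a ^ m * a ^ m' := pow_add a m m'
        _ = (y * a ^ (m + 1) + (p + i)) * a ^ m' := by rw [heqI]
        _ = y * (a ^ (m + 1) * a ^ m') + (p + i) * a ^ m' := by noncomm_ring
        _ = y * a ^ (m + m' + 1) + (p + i) * a ^ m' := by
            rw [← pow_add, show m + 1 + m' = m + m' + 1 from by omega]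
        _ = y * a ^ (m + m' + 1)
            + (p + i) * (y' ^ (m + 1) * a ^ (m' + (m + 1)) + (q' + j')) := by rw [hiter]
        _ = y * a ^ (m + m' + 1)
            + ((p + i) * (y' ^ (m + 1) * a ^ (m + m' + 1)) + (p + i) * (q' + j')) := by
            rw [show m' + (m + 1) = m + m' + 1 from by omega, mul_add]
    have expand : a ^ (m + m') - (y + (p + i) * y' ^ (m + 1)) * a ^ (m + m' + 1)
        = p * (q' + j') + (i * q' + i * j') := by
      rw [e1]
      generalize a ^ (m + m' + 1) = A
      generalize y' ^ (m + 1) = w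
      noncomm_ring
    have hPel : a ^ (m + m') - (y + (p + i) * y' ^ (m + 1)) * a ^ (m + m' + 1) ∈ P := by
      rw [expand]
      exact P.add_mem (P.mul_mem_right _ _ hp)
        (P.add_mem (P.mul_mem_left _ _ hq') (hIJ i hi j' hj'))
    exact hPS (m + m') (y + (p + i) * y' ^ (m + 1)) (by omega) hPel
  -- use the embedding
  obtain ⟨T, _, f, hf, hT⟩ := h P hPne hprime
  have ht : (f (P.ringCon.mk' a)) ^ n = (f (P.ringCon.mk' a)) ^ (n + 1) * f (P.ringCon.mk' x) := by
    simpa only [← map_pow, ← map_mul] using congrArg (fun r => f (P.ringCon.mk' r)) hax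
  obtain ⟨m, v, hm, hv⟩ := hT (f (P.ringCon.mk' a)) ⟨n, f (P.ringCon.mk' x), hn, ht⟩
  set N := max n m with hN
  have hNn : (f (P.ringCon.mk' a)) ^ N = (f (P.ringCon.mk' a)) ^ (N + 1) * f (P.ringCon.mk' x) := by
    obtain ⟨k, hk⟩ : ∃ k, N = n + k := ⟨N - n, by omega⟩
    rw [hk]; exact lift_right ht k
  have hNm : (f (P.ringCon.mk' a)) ^ N = v * (f (P.ringCon.mk' a)) ^ (N + 1) := by
    obtain ⟨k, hk⟩ : ∃ k, N = m + k := ⟨N - m, by omega⟩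
    rw [hk]; exact lift_left hv k
  have hkey := alg_key hNn hNm
  have heqf : f (P.ringCon.mk' (a ^ N)) = f (P.ringCon.mk' (a ^ N * x ^ (N + 1) * a ^ (N + 1))) := by
    simpa only [map_pow, map_mul] using hkey
  have h2 : P.ringCon.mk' (a ^ N) = P.ringCon.mk' (a ^ N * x ^ (N + 1) * a ^ (N + 1)) := hf heqf
  have h3 : P.ringCon (a ^ N) (a ^ N * x ^ (N + 1) * a ^ (N + 1)) := (RingCon.eq P.ringCon).mp h2
  rw [TwoSidedIdeal.rel_iff] at h3
  exact hPS N (a ^ N * x ^ (N + 1)) (by omega) h3
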